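/- Let Q, Q′ : ℝ² → ℝ be polynomial functions of total degree at most 2, and let ρ = ΔQ and ρ′ = ΔQ′ denote their (constant) Laplacians. Suppose there exist two distinct points p ≠ q in ℝ² at which Q(p) = Q′(p), Q(q) = Q′(q), ∇Q(p) = ∇Q′(p), and ∇Q(q) = ∇Q′(q). Let ℓ be the straight line through p and q. Then for every x ∈ ℝ², Q′(x) = Q(x) + (1/2)·(ρ′ − ρ)·dist(x, ℓ)². In particular, if ρ ≠ ρ′, then the set {x ∈ ℝ² : Q(x) = Q′(x)} is exactly the line ℓ. -/

import Mathlib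

private lemma sandpile_proj_hasFDerivAt (i : Fin 2) (x : EuclideanSpace ℝ (Fin 2)) :
    HasFDerivAt (fun y : EuclideanSpace ℝ (Fin 2) => y i)
      (EuclideanSpace.proj i : EuclideanSpace ℝ (Fin 2) →L[ℝ] ℝ) x := by
  have h := (EuclideanSpace.proj i : EuclideanSpace ℝ (Fin 2) →L[ℝ] ℝ).hasFDerivAt (x := x)
  have e : ⇑(EuclideanSpace.proj i : EuclideanSpace ℝ (Fin 2) →L[ℝ] ℝ)
      = fun y : EuclideanSpace ℝ (Fin 2) => y i := by ext y; simp
  rwa [e] at h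

private lemma sandpile_quad_fderiv_apply (a b c d e f : ℝ) (x v : EuclideanSpace ℝ (Fin 2)) :
    fderiv ℝ (fun y : EuclideanSpace ℝ (Fin 2) =>
        a * (y 0) ^ 2 + b * (y 0) * (y 1) + c * (y 1) ^ 2 + d * (y 0) + e * (y 1) + f) x v
      = (2*a*(x 0) + b*(x 1) + d) * (v 0) + (b*(x 0) + 2*c*(x 1) + e) * (v 1) := by
  have h0 := sandpile_proj_hasFDerivAt 0 x
  have h1 := sandpile_proj_hasFDerivAt 1 x
  have Hfun : (fun y : EuclideanSpace ℝ (Fin 2) =>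
        a * (y 0) ^ 2 + b * (y 0) * (y 1) + c * (y 1) ^ 2 + d * (y 0) + e * (y 1) + f)
      = (fun y : EuclideanSpace ℝ (Fin 2) => a * (y 0 * y 0) + b * (y 0 * y 1) + c * (y 1 * y 1)
          + d * (y 0) + e * (y 1) + f) := by
    funext y; ring
  rw [Hfun]
  have H := ((((((h0.mul h0).const_mul a).add ((h0.mul h1).const_mul b)).add
      ((h1.mul h1).const_mul c)).add (h0.const_mul d)).add (h1.const_mul e)).add_const f
  rw [HasFDerivAt.fderiv (f := fun y : EuclideanSpace ℝ (Fin 2) => a * (y 0 * y 0) + b * (y 0 * y 1)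
      + c * (y 1 * y 1) + d * (y 0) + e * (y 1) + f) H]
  simp
  ring

private lemma sandpile_coords_pos (p q : EuclideanSpace ℝ (Fin 2)) (hpq : p ≠ q) :
    0 < (q 0 - p 0)^2 + (q 1 - p 1)^2 := by
  rcases lt_or_eq_of_le (by positivity : (0:ℝ) ≤ (q 0 - p 0)^2 + (q 1 - p 1)^2) with h | h
  · exact h
  · exfalso; apply hpq
    have h0 : q 0 - p 0 = 0 := by nlinarith [sq_nonneg (q 0 - p 0), sq_nonneg (q 1 - p 1)]
    have h1 : q 1 - p 1 = 0 := by nlinarith [sq_nonneg (q 0 - p 0), sq_nonneg (q 1 - p 1)]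
    apply PiLp.ext; intro i; fin_cases i
    · show p 0 = q 0; linarith
    · show p 1 = q 1; linarith

private lemma sandpile_infDist_line (p q x : EuclideanSpace ℝ (Fin 2)) (hpq : p ≠ q) :
    Metric.infDist x (affineSpan ℝ {p, q} : Set (EuclideanSpace ℝ (Fin 2)))
      = Real.sqrt (((q 1 - p 1)*(x 0 - p 0) - (q 0 - p 0)*(x 1 - p 1))^2
         / ((q 0 - p 0)^2 + (q 1 - p 1)^2)) := by
  have hL := sandpile_coords_pos p q hpq
  set u0 := q 0 - p 0 with hu0
  set u1 := q 1 - p 1 with hu1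
  set L := u0^2 + u1^2 with hLdef
  set s := x 0 - p 0 with hs
  set t := x 1 - p 1 with ht
  have hcoord : ∀ r : ℝ, ∀ i : Fin 2,
      (AffineMap.lineMap p q r : EuclideanSpace ℝ (Fin 2)) i = p i + r * (q i - p i) := by
    intro r i
    simp [AffineMap.lineMap_apply, PiLp.add_apply, PiLp.smul_apply, PiLp.sub_apply]
    ring
  apply le_antisymm
  · set r : ℝ := (u0 * s + u1 * t) / L with hr
    have hmem : (AffineMap.lineMap p q r : EuclideanSpace ℝ (Fin 2))
        ∈ (affineSpan ℝ {p, q} : Set (EuclideanSpace ℝ (Fin 2))) :=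
      AffineMap.lineMap_mem_affineSpan_pair r p q
    refine le_trans (Metric.infDist_le_dist_of_mem hmem) (le_of_eq ?_)
    rw [EuclideanSpace.dist_eq]
    congr 1
    rw [Fin.sum_univ_two, hcoord r 0, hcoord r 1]
    rw [Real.dist_eq, Real.dist_eq, sq_abs, sq_abs]
    have : x 0 - (p 0 + r * (q 0 - p 0)) = s - r * u0 := by rw [hs, hu0]; ring
    rw [this]
    have : x 1 - (p 1 + r * (q 1 - p 1)) = t - r * u1 := by rw [ht, hu1]; ring
    rw [this]
    rw [hr]
    field_simp
    ring
  · by_contra hcon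
    push_neg at hcon
    rw [Metric.infDist_lt_iff ⟨p, subset_affineSpan ℝ {p,q} (Set.mem_insert p {q})⟩] at hcon
    obtain ⟨y, hy, hlt⟩ := hcon
    refine absurd hlt (not_lt.mpr ?_)
    have hy' : (y -ᵥ p) +ᵥ p ∈ affineSpan ℝ {p, q} := by
      simpa using hy
    obtain ⟨r, hrr⟩ := vadd_left_mem_affineSpan_pair.mp hy'
    have hyc : ∀ i : Fin 2, y i = p i + r * (q i - p i) := by
      intro i
      have := congrArg (fun v : EuclideanSpace ℝ (Fin 2) => v i) hrr
      simp only [vsub_eq_sub, PiLp.smul_apply, PiLp.sub_apply, smul_eq_mul] at this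
      linarith [this]
    rw [EuclideanSpace.dist_eq]
    apply Real.sqrt_le_sqrt
    rw [Fin.sum_univ_two, hyc 0, hyc 1, Real.dist_eq, Real.dist_eq, sq_abs, sq_abs]
    rw [div_le_iff₀ hL]
    have e0 : x 0 - (p 0 + r * (q 0 - p 0)) = s - r * u0 := by rw [hs, hu0]; ring
    have e1 : x 1 - (p 1 + r * (q 1 - p 1)) = t - r * u1 := by rw [ht, hu1]; ring
    rw [e0, e1]
    nlinarith [sq_nonneg (u0 * (s - r*u0) + u1 * (t - r*u1))]

set_option maxHeartbeats 1000000 in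
/-- Two quadratic polynomials on ℝ² that agree to first order at two distinct
points `p ≠ q` differ exactly by `(1/2)(ρ′ − ρ)` times the squared distance to the
line through `p` and `q`, where `ρ, ρ′` are their (constant) Laplacians; in
particular, if `ρ ≠ ρ′` their agreement set is exactly that line. -/
theorem quadratic_patch_matching
    (a b c d e f a' b' c' d' e' f' ρ ρ' : ℝ)
    (Q Q' : EuclideanSpace ℝ (Fin 2) → ℝ)
    (hQ : ∀ x, Q x = a * (x 0) ^ 2 + b * (x 0) * (x 1) + c * (x 1) ^ 2
      + d * (x 0) + e * (x 1) + f)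
    (hQ' : ∀ x, Q' x = a' * (x 0) ^ 2 + b' * (x 0) * (x 1) + c' * (x 1) ^ 2
      + d' * (x 0) + e' * (x 1) + f')
    (hρ : ρ = 2 * a + 2 * c) (hρ' : ρ' = 2 * a' + 2 * c')
    (p q : EuclideanSpace ℝ (Fin 2)) (hpq : p ≠ q)
    (hQp : Q p = Q' p) (hQq : Q q = Q' q)
    (hdp : fderiv ℝ Q p = fderiv ℝ Q' p)
    (hdq : fderiv ℝ Q q = fderiv ℝ Q' q) :
    (∀ x, Q' x = Q x + (1 / 2) * (ρ' - ρ) *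
      (Metric.infDist x (affineSpan ℝ {p, q} : Set (EuclideanSpace ℝ (Fin 2)))) ^ 2) ∧
    (ρ ≠ ρ' → {x | Q x = Q' x}
      = (affineSpan ℝ {p, q} : Set (EuclideanSpace ℝ (Fin 2)))) := by
  subst hρ hρ'
  have hQf : Q = fun x : EuclideanSpace ℝ (Fin 2) => a * (x 0) ^ 2 + b * (x 0) * (x 1)
      + c * (x 1) ^ 2 + d * (x 0) + e * (x 1) + f := funext hQ
  have hQ'f : Q' = fun x : EuclideanSpace ℝ (Fin 2) => a' * (x 0) ^ 2 + b' * (x 0) * (x 1)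
      + c' * (x 1) ^ 2 + d' * (x 0) + e' * (x 1) + f' := funext hQ'
  rw [hQf, hQ'f] at hdp hdq
  have hL := sandpile_coords_pos p q hpq
  have hLne : ((q 0 - p 0)^2 + (q 1 - p 1)^2) ≠ 0 := ne_of_gt hL
  -- gradient equations
  have E1p : 2*a*(p 0) + b*(p 1) + d = 2*a'*(p 0) + b'*(p 1) + d' := by
    have h := congrArg (fun (L : EuclideanSpace ℝ (Fin 2) →L[ℝ] ℝ) =>
      L (EuclideanSpace.single 0 1)) hdp
    simp only [sandpile_quad_fderiv_apply] at h
    simpa using h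
  have E2p : b*(p 0) + 2*c*(p 1) + e = b'*(p 0) + 2*c'*(p 1) + e' := by
    have h := congrArg (fun (L : EuclideanSpace ℝ (Fin 2) →L[ℝ] ℝ) =>
      L (EuclideanSpace.single 1 1)) hdp
    simp only [sandpile_quad_fderiv_apply] at h
    simpa using h
  have E1q : 2*a*(q 0) + b*(q 1) + d = 2*a'*(q 0) + b'*(q 1) + d' := by
    have h := congrArg (fun (L : EuclideanSpace ℝ (Fin 2) →L[ℝ] ℝ) =>
      L (EuclideanSpace.single 0 1)) hdq
    simp only [sandpile_quad_fderiv_apply] at h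
    simpa using h
  have E2q : b*(q 0) + 2*c*(q 1) + e = b'*(q 0) + 2*c'*(q 1) + e' := by
    have h := congrArg (fun (L : EuclideanSpace ℝ (Fin 2) →L[ℝ] ℝ) =>
      L (EuclideanSpace.single 1 1)) hdq
    simp only [sandpile_quad_fderiv_apply] at h
    simpa using h
  have vP : (a'-a)*(p 0)^2 + (b'-b)*(p 0)*(p 1) + (c'-c)*(p 1)^2
      + (d'-d)*(p 0) + (e'-e)*(p 1) + (f'-f) = 0 := by
    linear_combination hQ p - hQp - hQ' p
  have k1p : 2*(a'-a)*(p 0) + (b'-b)*(p 1) + (d'-d) = 0 := by linear_combination -E1p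
  have k2p : (b'-b)*(p 0) + 2*(c'-c)*(p 1) + (e'-e) = 0 := by linear_combination -E2p
  have hk1 : 2*(a'-a)*(q 0 - p 0) + (b'-b)*(q 1 - p 1) = 0 := by
    linear_combination E1p - E1q
  have hk2 : (b'-b)*(q 0 - p 0) + 2*(c'-c)*(q 1 - p 1) = 0 := by
    linear_combination E2p - E2q
  have hS : ∀ x : EuclideanSpace ℝ (Fin 2),
      (Metric.infDist x (affineSpan ℝ {p, q} : Set (EuclideanSpace ℝ (Fin 2))))^2
        = ((q 1 - p 1)*(x 0 - p 0) - (q 0 - p 0)*(x 1 - p 1))^2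
            / ((q 0 - p 0)^2 + (q 1 - p 1)^2) := by
    intro x
    rw [sandpile_infDist_line p q x hpq]
    exact Real.sq_sqrt (by positivity)
  have main : ∀ x : EuclideanSpace ℝ (Fin 2), Q' x = Q x + (1 / 2) * ((2*a'+2*c') - (2*a+2*c)) *
      (Metric.infDist x (affineSpan ℝ {p, q} : Set (EuclideanSpace ℝ (Fin 2)))) ^ 2 := by
    intro x
    rw [hS x, hQ x, hQ' x]
    set u0 := q 0 - p 0 with hu0def
    set u1 := q 1 - p 1 with hu1def
    set s := x 0 - p 0 with hsdef
    set t := x 1 - p 1 with htdef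
    have key : ((a' * (x 0) ^ 2 + b' * (x 0) * (x 1) + c' * (x 1) ^ 2
          + d' * (x 0) + e' * (x 1) + f')
        - (a * (x 0) ^ 2 + b * (x 0) * (x 1) + c * (x 1) ^ 2
          + d * (x 0) + e * (x 1) + f)) * (u0^2 + u1^2)
        = ((a'-a) + (c'-c)) * (u1 * s - u0 * t)^2 := by
      linear_combination ((u0^2+u1^2)*s) * k1p + ((u0^2+u1^2)*t) * k2p
        + (u0^2+u1^2) * vP
        + ((s^2 - t^2)*u0/2 + s*t*u1) * hk1 + (s*t*u0 - (s^2 - t^2)*u1/2) * hk2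
    have h5 := congrArg (fun z : ℝ => z / (u0^2+u1^2)) key
    simp only at h5
    rw [mul_div_cancel_right₀ _ hLne] at h5
    linear_combination h5
  refine ⟨main, ?_⟩
  intro hne
  have hAC : (a'-a) + (c'-c) ≠ 0 := fun h => hne (by linarith)
  have hclosed : IsClosed (affineSpan ℝ {p, q} : Set (EuclideanSpace ℝ (Fin 2))) :=
    AffineSubspace.closed_of_finiteDimensional _
  have hnonempty : (affineSpan ℝ {p, q} : Set (EuclideanSpace ℝ (Fin 2))).Nonempty :=
    ⟨p, subset_affineSpan ℝ {p,q} (Set.mem_insert p {q})⟩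
  ext x
  simp only [Set.mem_setOf_eq]
  rw [hclosed.mem_iff_infDist_zero hnonempty]
  constructor
  · intro hx
    have h := main x
    rw [hx] at h
    have h2 : (1 / 2) * ((2*a'+2*c') - (2*a+2*c)) *
        (Metric.infDist x (affineSpan ℝ {p, q} : Set (EuclideanSpace ℝ (Fin 2)))) ^ 2 = 0 := by
      linarith
    have h3 : (Metric.infDist x (affineSpan ℝ {p, q}
        : Set (EuclideanSpace ℝ (Fin 2)))) ^ 2 = 0 := by
      rcases mul_eq_zero.mp h2 with h4 | h4
      · exact absurd h4 (by intro h5; apply hAC; nlinarith)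
      · exact h4
    exact pow_eq_zero_iff (by norm_num) |>.mp h3
  · intro hx
    have h := main x
    rw [hx] at h
    simpa using h.symm
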